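/- Kac counting limit: Let ℓ > 0 and let V : ℝ → ℝ be continuously differentiable and ℓ-periodic, and assume V has no double zeros, i.e. there is no θ with V(θ) = 0 and V'(θ) = 0. Then lim_{ε → 0⁺} (1/(2ε)) ∫_0^ℓ 1_{[−ε,ε]}(V(θ)) · |V'(θ)| dθ = #{θ ∈ [0,ℓ) : V(θ) = 0}. -/

import Mathlib

open MeasureTheory Filter Set Topology

lemma kacZerosFinite (V : ℝ → ℝ) (hV : ContDiff ℝ 1 V)
    (hnd : ∀ θ : ℝ, ¬ (V θ = 0 ∧ deriv V θ = 0)) (a b : ℝ) :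
    ({θ : ℝ | V θ = 0} ∩ Set.Icc a b).Finite := by
  by_contra h
  have hinf : ({θ : ℝ | V θ = 0} ∩ Set.Icc a b).Infinite := h
  obtain ⟨x, hxK, hacc⟩ := hinf.exists_accPt_of_subset_isCompact isCompact_Icc
    Set.inter_subset_right
  have hZc : IsClosed {θ : ℝ | V θ = 0} := isClosed_eq hV.continuous continuous_const
  have hVx : V x = 0 := by
    have hx : x ∈ closure ({θ : ℝ | V θ = 0} ∩ Set.Icc a b) :=
      mem_closure_iff_clusterPt.2 hacc.clusterPt
    have := (closure_minimal Set.inter_subset_left hZc) hx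
    exact this
  have hdx : deriv V x ≠ 0 := fun hd => hnd x ⟨hVx, hd⟩
  have hder : HasDerivAt V (deriv V x) x :=
    ((hV.differentiable one_ne_zero) x).hasDerivAt
  have hne : ∀ᶠ z in 𝓝[≠] x, V z ≠ V x := hder.eventually_ne hdx
  have hfalse : ∀ᶠ z in 𝓝[≠] x ⊓ 𝓟 ({θ : ℝ | V θ = 0} ∩ Set.Icc a b), False := by
    filter_upwards [hne.filter_mono inf_le_left,
      (eventually_principal.2 (fun z hz => hz)).filter_mono inf_le_right] with z h1 h2
    exact h1 (by rw [hVx]; exact h2.1)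
  haveI : (𝓝[≠] x ⊓ 𝓟 ({θ : ℝ | V θ = 0} ∩ Set.Icc a b)).NeBot := hacc
  obtain ⟨z, hz⟩ := hfalse.exists
  exact hz

lemma kacPosLB (V : ℝ → ℝ) (hV : ContDiff ℝ 1 V) {K : Set ℝ} (hK : IsCompact K)
    (h : ∀ θ ∈ K, V θ ≠ 0) : ∃ c > 0, ∀ θ ∈ K, c ≤ |V θ| := by
  rcases K.eq_empty_or_nonempty with rfl | hne
  · exact ⟨1, one_pos, fun θ hθ => hθ.elim⟩
  · obtain ⟨x, hxK, hmin⟩ := hK.exists_isMinOn hne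
      ((continuous_abs.comp hV.continuous).continuousOn)
    exact ⟨|V x|, abs_pos.2 (h x hxK), fun θ hθ => hmin hθ⟩

lemma kacIntegrable (V : ℝ → ℝ) (hV : ContDiff ℝ 1 V) (ε a b : ℝ) :
    IntervalIntegrable (fun θ : ℝ =>
      Set.indicator (Set.Icc (-ε) ε) (fun _ => (1 : ℝ)) (V θ) * |deriv V θ|) volume a b := by
  have hd : Continuous (deriv V) := hV.continuous_deriv le_rfl
  have hg : IntervalIntegrable (fun θ => |deriv V θ|) volume a b :=
    (hd.abs).intervalIntegrable a b
  refine hg.mono_fun ?_ ?_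
  · have hm : Measurable fun θ : ℝ =>
        Set.indicator (Set.Icc (-ε) ε) (fun _ => (1 : ℝ)) (V θ) * |deriv V θ| := by
      exact ((measurable_const.indicator measurableSet_Icc).comp
        hV.continuous.measurable).mul hd.abs.measurable
    exact hm.aestronglyMeasurable
  · refine Filter.Eventually.of_forall (fun θ => ?_)
    simp only [Real.norm_eq_abs, abs_abs]
    rw [abs_mul, abs_abs]
    have h1 : |Set.indicator (Set.Icc (-ε) ε) (fun _ => (1 : ℝ)) (V θ)| ≤ 1 := by
      rw [Set.indicator_apply]; split_ifs <;> simp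
    calc |Set.indicator (Set.Icc (-ε) ε) (fun _ => (1 : ℝ)) (V θ)| * |deriv V θ|
        ≤ 1 * |deriv V θ| := by gcongr
      _ = |deriv V θ| := one_mul _

lemma kacSignDichotomy (V : ℝ → ℝ) (hV : ContDiff ℝ 1 V) {a b : ℝ} (hab : a ≤ b)
    (hd : ∀ θ ∈ Set.Icc a b, deriv V θ ≠ 0) :
    (∀ θ ∈ Set.Icc a b, 0 < deriv V θ) ∨ (∀ θ ∈ Set.Icc a b, deriv V θ < 0) := by
  have hc : ContinuousOn (deriv V) (Set.Icc a b) :=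
    (hV.continuous_deriv le_rfl).continuousOn
  have ha : a ∈ Set.Icc a b := ⟨le_refl a, hab⟩
  rcases (hd a ha).lt_or_gt with hpos | hneg
  · right
    intro θ hθ
    by_contra hle
    push_neg at hle
    have hlt : 0 < deriv V θ := (hd θ hθ).lt_or_gt.resolve_left (not_lt.2 hle)
    have hsub : Set.uIcc a θ ⊆ Set.Icc a b :=
      Set.uIcc_subset_Icc ha hθ
    have := intermediate_value_uIcc (hc.mono hsub)
    have h0 : (0:ℝ) ∈ Set.uIcc (deriv V a) (deriv V θ) :=
      Set.mem_uIcc.2 (Or.inl ⟨hpos.le, hlt.le⟩)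
    obtain ⟨x, hx, hx0⟩ := this h0
    exact hd x (hsub hx) hx0
  · left
    intro θ hθ
    by_contra hle
    push_neg at hle
    have hlt : deriv V θ < 0 := (hd θ hθ).lt_or_gt.resolve_right (not_lt.2 hle)
    have hsub : Set.uIcc a θ ⊆ Set.Icc a b := Set.uIcc_subset_Icc ha hθ
    have := intermediate_value_uIcc (hc.mono hsub)
    have h0 : (0:ℝ) ∈ Set.uIcc (deriv V a) (deriv V θ) :=
      Set.mem_uIcc.2 (Or.inr ⟨hlt.le, hneg.le⟩)
    obtain ⟨x, hx, hx0⟩ := this h0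
    exact hd x (hsub hx) hx0

lemma kacInjOn (V : ℝ → ℝ) (hV : ContDiff ℝ 1 V) {a b : ℝ} (hab : a ≤ b)
    (hd : ∀ θ ∈ Set.Icc a b, deriv V θ ≠ 0) : Set.InjOn V (Set.Icc a b) := by
  rcases kacSignDichotomy V hV hab hd with h | h
  · exact (strictMonoOn_of_deriv_pos (convex_Icc a b) hV.continuous.continuousOn
      (fun x hx => h x ((interior_subset : interior (Set.Icc a b) ⊆ _) hx))).injOn
  · exact (strictAntiOn_of_deriv_neg (convex_Icc a b) hV.continuous.continuousOn
      (fun x hx => h x ((interior_subset : interior (Set.Icc a b) ⊆ _) hx))).injOn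

lemma kacMiddlePos (V : ℝ → ℝ) (hV : ContDiff ℝ 1 V) {a b t : ℝ}
    (hta : a < t) (htb : t < b) (hVt : V t = 0)
    (hd : ∀ θ ∈ Set.Icc a b, 0 < deriv V θ) :
    ∃ ε₀ > 0, ∀ ε : ℝ, 0 < ε → ε < ε₀ →
      ∫ θ in a..b, Set.indicator (Set.Icc (-ε) ε) (fun _ => (1 : ℝ)) (V θ) * |deriv V θ|
        = 2 * ε := by
  have hab : a ≤ b := hta.le.trans htb.le
  have hcont : ContinuousOn V (Set.Icc a b) := hV.continuous.continuousOn
  have hmono : StrictMonoOn V (Set.Icc a b) :=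
    strictMonoOn_of_deriv_pos (convex_Icc a b) hcont
      (fun x hx => hd x (interior_subset hx))
  have ha : a ∈ Set.Icc a b := ⟨le_refl a, hab⟩
  have hb : b ∈ Set.Icc a b := ⟨hab, le_refl b⟩
  have htm : t ∈ Set.Icc a b := ⟨hta.le, htb.le⟩
  have hVa : V a < 0 := hVt ▸ hmono ha htm hta
  have hVb : 0 < V b := hVt ▸ hmono htm hb htb
  refine ⟨min (-V a) (V b), lt_min (by linarith) hVb, fun ε hε hε₀ => ?_⟩
  have hεa : V a < -ε := by
    have := lt_of_lt_of_le hε₀ (min_le_left _ _); linarith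
  have hεb : ε < V b := lt_of_lt_of_le hε₀ (min_le_right _ _)
  -- find α, β with V α = -ε, V β = ε
  obtain ⟨α, hαm, hVα⟩ : ∃ α ∈ Set.Icc a b, V α = -ε := by
    have := intermediate_value_Icc hab hcont
    exact this ⟨hεa.le, by linarith⟩
  obtain ⟨β, hβm, hVβ⟩ : ∃ β ∈ Set.Icc a b, V β = ε := by
    have := intermediate_value_Icc hab hcont
    exact this ⟨by linarith, hεb.le⟩
  have hαβ : α < β := by
    have : V α < V β := by rw [hVα, hVβ]; linarith
    exact (hmono.lt_iff_lt hαm hβm).1 this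
  -- membership equivalence
  have hmem : ∀ θ ∈ Set.Icc a b, (V θ ∈ Set.Icc (-ε) ε ↔ θ ∈ Set.Icc α β) := by
    intro θ hθ
    constructor
    · rintro ⟨h1, h2⟩
      exact ⟨(hmono.le_iff_le hαm hθ).1 (hVα ▸ h1), (hmono.le_iff_le hθ hβm).1 (hVβ ▸ h2)⟩
    · rintro ⟨h1, h2⟩
      exact ⟨hVα ▸ (hmono.le_iff_le hαm hθ).2 h1, hVβ ▸ (hmono.le_iff_le hθ hβm).2 h2⟩
  set f : ℝ → ℝ := fun θ =>
    Set.indicator (Set.Icc (-ε) ε) (fun _ => (1 : ℝ)) (V θ) * |deriv V θ| with hf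
  have hint : ∀ c d : ℝ, Set.uIcc c d ⊆ Set.uIcc a b → IntervalIntegrable f volume c d := by
    intro c d h
    have : IntervalIntegrable f volume a b := by
      have hdc : Continuous (deriv V) := hV.continuous_deriv le_rfl
      refine ((hdc.abs).intervalIntegrable a b).mono_fun ?_ ?_
      · exact (((measurable_const.indicator measurableSet_Icc).comp
          hV.continuous.measurable).mul hdc.abs.measurable).aestronglyMeasurable
      · refine Filter.Eventually.of_forall (fun θ => ?_)
        simp only [Real.norm_eq_abs, abs_abs, hf]
        rw [abs_mul, abs_abs]
        have h1 : |Set.indicator (Set.Icc (-ε) ε) (fun _ => (1 : ℝ)) (V θ)| ≤ 1 := by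
          rw [Set.indicator_apply]; split_ifs <;> simp
        calc |Set.indicator (Set.Icc (-ε) ε) (fun _ => (1 : ℝ)) (V θ)| * |deriv V θ|
            ≤ 1 * |deriv V θ| := by gcongr
          _ = |deriv V θ| := one_mul _
    exact this.mono_set h
  have huab : Set.uIcc a b = Set.Icc a b := Set.uIcc_of_le hab
  have hsplit : ∫ θ in a..b, f θ =
      (∫ θ in a..α, f θ) + (∫ θ in α..β, f θ) + (∫ θ in β..b, f θ) := by
    rw [intervalIntegral.integral_add_adjacent_intervals
        (hint a α (by rw [huab]; exact Set.uIcc_subset_Icc ha hαm))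
        (hint α β (by rw [huab]; exact Set.uIcc_subset_Icc hαm hβm)),
      intervalIntegral.integral_add_adjacent_intervals
        (hint a β (by rw [huab]; exact Set.uIcc_subset_Icc ha hβm))
        (hint β b (by rw [huab]; exact Set.uIcc_subset_Icc hβm hb))]
  have hleft : (∫ θ in a..α, f θ) = 0 := by
    have : ∀ᵐ θ, θ ∈ Set.uIoc a α → f θ = 0 := by
      have hα0 : volume ({α} : Set ℝ) = 0 := measure_singleton α
      filter_upwards [measure_eq_zero_iff_ae_notMem.1 hα0] with θ hθne hθ
      rw [Set.uIoc_of_le hαm.1] at hθ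
      have hθab : θ ∈ Set.Icc a b := ⟨hθ.1.le, hθ.2.trans hαm.2⟩
      have hθα : θ < α := lt_of_le_of_ne hθ.2 (by simpa using hθne)
      have : V θ ∉ Set.Icc (-ε) ε := by
        intro hmem'
        have := (hmem θ hθab).1 hmem'
        exact absurd this.1 (not_le.2 hθα)
      simp [hf, Set.indicator_of_notMem this]
    rw [intervalIntegral.integral_congr_ae this]
    simp
  have hright : (∫ θ in β..b, f θ) = 0 := by
    have : ∀ᵐ θ, θ ∈ Set.uIoc β b → f θ = 0 := by
      refine Filter.Eventually.of_forall (fun θ hθ => ?_)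
      rw [Set.uIoc_of_le hβm.2] at hθ
      have hθab : θ ∈ Set.Icc a b := ⟨hβm.1.trans hθ.1.le, hθ.2⟩
      have : V θ ∉ Set.Icc (-ε) ε := by
        intro hmem'
        have := (hmem θ hθab).1 hmem'
        exact absurd this.2 (not_le.2 hθ.1)
      simp [hf, Set.indicator_of_notMem this]
    rw [intervalIntegral.integral_congr_ae this]
    simp
  have hmid : (∫ θ in α..β, f θ) = 2 * ε := by
    have heq : Set.EqOn f (fun θ => deriv V θ) (Set.uIcc α β) := by
      intro θ hθ
      rw [Set.uIcc_of_le hαβ.le] at hθ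
      have hθab : θ ∈ Set.Icc a b := ⟨hαm.1.trans hθ.1, hθ.2.trans hβm.2⟩
      have h1 : V θ ∈ Set.Icc (-ε) ε := (hmem θ hθab).2 hθ
      simp only [hf, Set.indicator_of_mem h1, one_mul]
      exact abs_of_pos (hd θ hθab)
    rw [intervalIntegral.integral_congr heq]
    rw [intervalIntegral.integral_deriv_eq_sub
      (fun x _ => (hV.differentiable one_ne_zero) x)
      ((hV.continuous_deriv le_rfl).intervalIntegrable _ _)]
    rw [hVβ, hVα]; ring
  rw [hsplit, hleft, hright, hmid]; ring

lemma kacMiddle (V : ℝ → ℝ) (hV : ContDiff ℝ 1 V) {a b t : ℝ}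
    (hta : a < t) (htb : t < b) (hVt : V t = 0)
    (hd : ∀ θ ∈ Set.Icc a b, deriv V θ ≠ 0) :
    ∃ ε₀ > 0, ∀ ε : ℝ, 0 < ε → ε < ε₀ →
      ∫ θ in a..b, Set.indicator (Set.Icc (-ε) ε) (fun _ => (1 : ℝ)) (V θ) * |deriv V θ|
        = 2 * ε := by
  rcases kacSignDichotomy V hV (hta.le.trans htb.le) hd with hpos | hneg
  · exact kacMiddlePos V hV hta htb hVt hpos
  · set W : ℝ → ℝ := fun x => -V x with hW
    have hWc : ContDiff ℝ 1 W := hV.neg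
    have hWd : ∀ x : ℝ, deriv W x = -deriv V x := fun x => deriv.neg
    have hWt : W t = 0 := by simp [hW, hVt]
    have hWpos : ∀ θ ∈ Set.Icc a b, 0 < deriv W θ := by
      intro θ hθ; rw [hWd]; linarith [hneg θ hθ]
    obtain ⟨ε₀, hε₀, hkey⟩ := kacMiddlePos W hWc hta htb hWt hWpos
    refine ⟨ε₀, hε₀, fun ε hε hεlt => ?_⟩
    rw [← hkey ε hε hεlt]
    apply intervalIntegral.integral_congr
    intro θ _
    have h1 : (W θ ∈ Set.Icc (-ε) ε) ↔ (V θ ∈ Set.Icc (-ε) ε) := by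
      simp only [hW, Set.mem_Icc]
      constructor <;> (rintro ⟨u, v⟩; constructor <;> linarith)
    have h2 : |deriv W θ| = |deriv V θ| := by rw [hWd, abs_neg]
    simp only []
    rw [← h2]
    by_cases hc : V θ ∈ Set.Icc (-ε) ε
    · rw [Set.indicator_of_mem hc, Set.indicator_of_mem (h1.2 hc)]
    · rw [Set.indicator_of_notMem hc, Set.indicator_of_notMem (fun h => hc (h1.1 h))]

lemma kacCore (V : ℝ → ℝ) (hV : ContDiff ℝ 1 V)
    (hnd : ∀ θ : ℝ, ¬ (V θ = 0 ∧ deriv V θ = 0)) :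
    ∀ n : ℕ, ∀ a b : ℝ, a < b → V a ≠ 0 → V b ≠ 0 →
      ({θ : ℝ | V θ = 0} ∩ Set.Icc a b).ncard = n →
      ∃ ε₀ > 0, ∀ ε : ℝ, 0 < ε → ε < ε₀ →
        ∫ θ in a..b, Set.indicator (Set.Icc (-ε) ε) (fun _ => (1 : ℝ)) (V θ) * |deriv V θ|
          = 2 * ε * n := by
  intro n
  induction n using Nat.strong_induction_on with
  | _ n IH =>
  intro a b hab hVa hVb hn
  have hfin : ({θ : ℝ | V θ = 0} ∩ Set.Icc a b).Finite := kacZerosFinite V hV hnd a b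
  by_cases hne : ({θ : ℝ | V θ = 0} ∩ Set.Icc a b).Nonempty
  · -- pick a zero t
    obtain ⟨t, htZ, htI⟩ := hne
    have hVt : V t = 0 := htZ
    have hta : a < t := lt_of_le_of_ne htI.1 (fun h => hVa (h ▸ hVt))
    have htb : t < b := lt_of_le_of_ne htI.2 (fun h => hVb (h.symm ▸ hVt))
    have hdt : deriv V t ≠ 0 := fun h => hnd t ⟨hVt, h⟩
    -- find δ with deriv nonzero on closed interval around t, inside (a,b)
    have hev : ∀ᶠ θ in 𝓝 t, deriv V θ ≠ 0 :=
      ((hV.continuous_deriv le_rfl).continuousAt).eventually_ne hdt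
    obtain ⟨δ₁, hδ₁, hball⟩ := Metric.eventually_nhds_iff.1 hev
    set δ : ℝ := min (δ₁ / 2) (min ((t - a) / 2) ((b - t) / 2)) with hδdef
    have hδpos : 0 < δ := by
      apply lt_min (by linarith)
      exact lt_min (by linarith) (by linarith)
    have hδδ₁ : δ < δ₁ := lt_of_le_of_lt (min_le_left _ _) (by linarith)
    have hδta : δ < t - a := lt_of_le_of_lt ((min_le_right _ _).trans (min_le_left _ _)) (by linarith)
    have hδbt : δ < b - t := lt_of_le_of_lt ((min_le_right _ _).trans (min_le_right _ _)) (by linarith)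
    set u : ℝ := t - δ with hu
    set v : ℝ := t + δ with hv
    have hau : a < u := by simp only [hu]; linarith
    have huv : u < v := by simp only [hu, hv]; linarith
    have hvb : v < b := by simp only [hv]; linarith
    have hduv : ∀ θ ∈ Set.Icc u v, deriv V θ ≠ 0 := by
      intro θ hθ
      apply hball
      rw [Real.dist_eq, abs_lt]
      constructor
      · have := hθ.1; simp only [hu] at this; linarith
      · have := hθ.2; simp only [hv] at this; linarith
    have hinj : Set.InjOn V (Set.Icc u v) := kacInjOn V hV huv.le hduv
    have htuv : t ∈ Set.Icc u v := ⟨by simp [hu, hδpos.le], by simp [hv, hδpos.le]⟩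
    have hVu : V u ≠ 0 := by
      intro h
      have : u = t := hinj ⟨le_refl u, huv.le⟩ htuv (h.trans hVt.symm)
      simp only [hu] at this; linarith
    have hVv : V v ≠ 0 := by
      intro h
      have : v = t := hinj ⟨huv.le, le_refl v⟩ htuv (h.trans hVt.symm)
      simp only [hv] at this; linarith
    -- decompose the zero set
    set Z : Set ℝ := {θ : ℝ | V θ = 0} with hZ
    set S₁ : Set ℝ := Z ∩ Set.Icc a u with hS₁
    set S₂ : Set ℝ := Z ∩ Set.Icc u v with hS₂
    set S₃ : Set ℝ := Z ∩ Set.Icc v b with hS₃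
    have hS₂eq : S₂ = {t} := by
      apply Set.eq_singleton_iff_unique_mem.2
      refine ⟨⟨hVt, htuv⟩, fun x hx => hinj hx.2 htuv (hx.1.trans hVt.symm)⟩
    have hsub1 : Set.Icc a u ⊆ Set.Icc a b := Set.Icc_subset_Icc le_rfl (by linarith)
    have hsub3 : Set.Icc v b ⊆ Set.Icc a b := Set.Icc_subset_Icc (by linarith) le_rfl
    have hunion : Z ∩ Set.Icc a b = S₁ ∪ S₂ ∪ S₃ := by
      ext x
      simp only [hS₁, hS₂, hS₃, Set.mem_inter_iff, Set.mem_union, Set.mem_Icc]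
      constructor
      · rintro ⟨hxZ, hx1, hx2⟩
        rcases le_or_gt x u with h | h
        · exact Or.inl (Or.inl ⟨hxZ, hx1, h⟩)
        · rcases le_or_gt x v with h' | h'
          · exact Or.inl (Or.inr ⟨hxZ, h.le, h'⟩)
          · exact Or.inr ⟨hxZ, h'.le, hx2⟩
      · rintro ((⟨hxZ, h1, h2⟩ | ⟨hxZ, h1, h2⟩) | ⟨hxZ, h1, h2⟩)
        · exact ⟨hxZ, h1, by linarith⟩
        · exact ⟨hxZ, by linarith, by linarith⟩
        · exact ⟨hxZ, by linarith, h2⟩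
    have hfin1 : S₁.Finite := hfin.subset (by rw [hunion]; exact fun x hx => Or.inl (Or.inl hx))
    have hfin2 : S₂.Finite := by rw [hS₂eq]; exact Set.finite_singleton t
    have hfin3 : S₃.Finite := hfin.subset (by rw [hunion]; exact fun x hx => Or.inr hx)
    have hd12 : Disjoint S₁ S₂ := by
      rw [Set.disjoint_left]
      rintro x ⟨hxZ, _, hxu⟩ ⟨_, hux, _⟩
      have hxu' : x = u := le_antisymm hxu hux
      exact hVu (by rw [← hxu']; exact hxZ)
    have hd23 : Disjoint (S₁ ∪ S₂) S₃ := by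
      rw [Set.disjoint_left]
      rintro x (⟨hxZ, _, hxu⟩ | ⟨hxZ, _, hxv⟩) ⟨_, hvx, _⟩
      · have hxv' : x = v := le_antisymm (by linarith) (by linarith)
        exact hVv (by rw [← hxv']; exact hxZ)
      · have hxv' : x = v := le_antisymm hxv hvx
        exact hVv (by rw [← hxv']; exact hxZ)
    have hcard : S₁.ncard + 1 + S₃.ncard = n := by
      rw [← hn, hunion, Set.ncard_union_eq hd23 (hfin1.union hfin2) hfin3,
        Set.ncard_union_eq hd12 hfin1 hfin2, hS₂eq, Set.ncard_singleton]
    have hn1 : S₁.ncard < n := by omega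
    have hn3 : S₃.ncard < n := by omega
    obtain ⟨ε₁, hε₁, hkey₁⟩ := IH S₁.ncard hn1 a u hau hVa hVu rfl
    obtain ⟨ε₃, hε₃, hkey₃⟩ := IH S₃.ncard hn3 v b hvb hVv hVb rfl
    have hut : u < t := by simp only [hu]; linarith
    have htv : t < v := by simp only [hv]; linarith
    obtain ⟨ε₂, hε₂, hkey₂⟩ := kacMiddle V hV hut htv hVt hduv
    refine ⟨min ε₁ (min ε₂ ε₃), lt_min hε₁ (lt_min hε₂ hε₃), fun ε hε hεlt => ?_⟩
    have hεl1 : ε < ε₁ := lt_of_lt_of_le hεlt (min_le_left _ _)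
    have hεl2 : ε < ε₂ := lt_of_lt_of_le hεlt ((min_le_right _ _).trans (min_le_left _ _))
    have hεl3 : ε < ε₃ := lt_of_lt_of_le hεlt ((min_le_right _ _).trans (min_le_right _ _))
    have hi := kacIntegrable V hV ε
    rw [← intervalIntegral.integral_add_adjacent_intervals (hi a u) (hi u b),
      ← intervalIntegral.integral_add_adjacent_intervals (hi u v) (hi v b),
      hkey₁ ε hε hεl1, hkey₂ ε hε hεl2, hkey₃ ε hε hεl3, ← hcard]
    push_cast
    ring
  · -- no zeros
    have hzero : ∀ θ ∈ Set.Icc a b, V θ ≠ 0 := by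
      intro θ hθ hVθ
      exact hne ⟨θ, hVθ, hθ⟩
    obtain ⟨c, hc, hlb⟩ := kacPosLB V hV isCompact_Icc hzero
    have hn0 : n = 0 := by
      rw [← hn, Set.ncard_eq_zero hfin]
      rw [Set.eq_empty_iff_forall_notMem]
      rintro x ⟨hxZ, hxI⟩
      exact hzero x hxI hxZ
    refine ⟨c, hc, fun ε hε hεc => ?_⟩
    have : Set.EqOn (fun θ : ℝ =>
        Set.indicator (Set.Icc (-ε) ε) (fun _ => (1 : ℝ)) (V θ) * |deriv V θ|)
        (fun _ => (0:ℝ)) (Set.uIcc a b) := by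
      intro θ hθ
      rw [Set.uIcc_of_le hab.le] at hθ
      have : V θ ∉ Set.Icc (-ε) ε := by
        rintro ⟨h1, h2⟩
        have := hlb θ hθ
        rcases abs_cases (V θ) with ⟨he, _⟩ | ⟨he, _⟩ <;> [linarith; linarith]
      simp [Set.indicator_of_notMem this]
    rw [intervalIntegral.integral_congr this, hn0]
    simp

lemma kacCountShift (ℓ : ℝ) (hℓ : 0 < ℓ) (V : ℝ → ℝ)
    (hper : ∀ θ : ℝ, V (θ + ℓ) = V θ)
    (hfin : ∀ c d : ℝ, ({θ : ℝ | V θ = 0} ∩ Set.Icc c d).Finite)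
    (a : ℝ) (ha : a ∈ Set.Ico 0 ℓ) (hVa : V a ≠ 0) :
    ({θ : ℝ | V θ = 0} ∩ Set.Icc a (a + ℓ)).ncard
      = ({θ : ℝ | V θ = 0} ∩ Set.Ico 0 ℓ).ncard := by
  set Z : Set ℝ := {θ : ℝ | V θ = 0} with hZ
  have hIccIco : Z ∩ Set.Icc a (a + ℓ) = Z ∩ Set.Ico a (a + ℓ) := by
    ext x
    simp only [Set.mem_inter_iff, Set.mem_Icc, Set.mem_Ico, hZ, Set.mem_setOf_eq]
    constructor
    · rintro ⟨hxZ, h1, h2⟩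
      refine ⟨hxZ, h1, lt_of_le_of_ne h2 (fun h => ?_)⟩
      apply hVa
      rw [← hper a, ← h]; exact hxZ
    · rintro ⟨hxZ, h1, h2⟩; exact ⟨hxZ, h1, h2.le⟩
  have hfinsub : ∀ s : Set ℝ, s ⊆ Set.Icc (a - ℓ) (a + ℓ) → (Z ∩ s).Finite := by
    intro s hs
    exact (hfin (a - ℓ) (a + ℓ)).subset (fun x hx => ⟨hx.1, hs hx.2⟩)
  have hsplit1 : Z ∩ Set.Ico a (a + ℓ) = (Z ∩ Set.Ico a ℓ) ∪ (Z ∩ Set.Ico ℓ (a + ℓ)) := by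
    rw [← Set.inter_union_distrib_left, Set.Ico_union_Ico_eq_Ico ha.2.le (by linarith [ha.1, ha.2])]
  have himg : Z ∩ Set.Ico ℓ (a + ℓ) = (fun x => x + ℓ) '' (Z ∩ Set.Ico 0 a) := by
    ext x
    simp only [Set.mem_inter_iff, Set.mem_Ico, Set.mem_image, hZ, Set.mem_setOf_eq]
    constructor
    · rintro ⟨hxZ, h1, h2⟩
      refine ⟨x - ℓ, ⟨?_, by linarith, by linarith⟩, by ring⟩
      rw [← hper (x - ℓ), show x - ℓ + ℓ = x by ring]
      exact hxZ
    · rintro ⟨y, ⟨hyZ, hy1, hy2⟩, rfl⟩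
      exact ⟨by rw [hper]; exact hyZ, by linarith, by linarith⟩
  have hsplit2 : Z ∩ Set.Ico 0 ℓ = (Z ∩ Set.Ico 0 a) ∪ (Z ∩ Set.Ico a ℓ) := by
    rw [← Set.inter_union_distrib_left, Set.Ico_union_Ico_eq_Ico ha.1 ha.2.le]
  have hdisj1 : Disjoint (Z ∩ Set.Ico a ℓ) (Z ∩ Set.Ico ℓ (a + ℓ)) := by
    rw [Set.disjoint_left]
    rintro x ⟨_, _, h2⟩ ⟨_, h3, _⟩
    linarith
  have hdisj2 : Disjoint (Z ∩ Set.Ico 0 a) (Z ∩ Set.Ico a ℓ) := by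
    rw [Set.disjoint_left]
    rintro x ⟨_, _, h2⟩ ⟨_, h3, _⟩
    linarith
  have hf1 : (Z ∩ Set.Ico a ℓ).Finite := hfinsub _ (fun x hx => by
    obtain ⟨h1, h2⟩ := hx
    exact ⟨by linarith [ha.1, ha.2], by linarith [ha.1, ha.2]⟩)
  have hf2 : (Z ∩ Set.Ico ℓ (a + ℓ)).Finite := hfinsub _ (fun x hx => by
    obtain ⟨h1, h2⟩ := hx
    exact ⟨by linarith [ha.1, ha.2], by linarith [ha.1, ha.2]⟩)
  have hf0 : (Z ∩ Set.Ico 0 a).Finite := hfinsub _ (fun x hx => by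
    obtain ⟨h1, h2⟩ := hx
    exact ⟨by linarith [ha.1, ha.2], by linarith [ha.1, ha.2]⟩)
  rw [hIccIco, hsplit1, Set.ncard_union_eq hdisj1 hf1 hf2, himg,
    Set.ncard_image_of_injective _ (add_left_injective ℓ),
    hsplit2, Set.ncard_union_eq hdisj2 hf0 hf1]
  ring

theorem kac_counting_limit (ℓ : ℝ) (hℓ : 0 < ℓ) (V : ℝ → ℝ)
    (hV : ContDiff ℝ 1 V)
    (hper : ∀ θ : ℝ, V (θ + ℓ) = V θ)
    (hnd : ∀ θ : ℝ, ¬ (V θ = 0 ∧ deriv V θ = 0)) :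
    Tendsto (fun ε : ℝ => (1 / (2 * ε)) * ∫ θ in (0 : ℝ)..ℓ,
        Set.indicator (Set.Icc (-ε) ε) (fun _ => (1 : ℝ)) (V θ) * |deriv V θ|)
      (nhdsWithin 0 (Set.Ioi 0))
      (nhds ({θ ∈ Set.Ico (0 : ℝ) ℓ | V θ = 0}.ncard : ℝ)) := by
  have hfin : ∀ c d : ℝ, ({θ : ℝ | V θ = 0} ∩ Set.Icc c d).Finite :=
    kacZerosFinite V hV hnd
  -- pick a point a in [0, ℓ) where V a ≠ 0
  obtain ⟨a, haI, haZ⟩ : (Set.Ico (0:ℝ) ℓ \ {θ : ℝ | V θ = 0}).Nonempty := by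
    rw [Set.diff_nonempty]
    intro hsub
    exact (Set.Ico_infinite hℓ)
      ((hfin 0 ℓ).subset (fun x hx => ⟨hsub hx, hx.1, hx.2.le⟩))
  have hVa : V a ≠ 0 := haZ
  have hVal : V (a + ℓ) ≠ 0 := by rw [hper]; exact hVa
  -- identify the ncard in the statement
  have hsep : {θ ∈ Set.Ico (0:ℝ) ℓ | V θ = 0} = {θ : ℝ | V θ = 0} ∩ Set.Ico 0 ℓ := by
    ext x; simp only [Set.mem_sep_iff, Set.mem_inter_iff, Set.mem_setOf_eq]; tauto
  have hcount : ({θ : ℝ | V θ = 0} ∩ Set.Icc a (a + ℓ)).ncard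
      = {θ ∈ Set.Ico (0:ℝ) ℓ | V θ = 0}.ncard := by
    rw [hsep]; exact kacCountShift ℓ hℓ V hper hfin a haI hVa
  obtain ⟨ε₀, hε₀, hkey⟩ := kacCore V hV hnd
    (({θ : ℝ | V θ = 0} ∩ Set.Icc a (a + ℓ)).ncard) a (a + ℓ)
    (by linarith) hVa hVal rfl
  -- periodicity of the derivative
  have hper' : ∀ θ : ℝ, deriv V (θ + ℓ) = deriv V θ := by
    intro θ
    have hfun : (fun x => V (x + ℓ)) = V := funext hper
    calc deriv V (θ + ℓ) = deriv (fun x => V (x + ℓ)) θ := (deriv_comp_add_const V ℓ θ).symm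
      _ = deriv V θ := by rw [hfun]
  set N : ℝ := ({θ ∈ Set.Ico (0:ℝ) ℓ | V θ = 0}.ncard : ℝ) with hN
  have hev : ∀ᶠ ε in 𝓝[>] (0:ℝ), (fun _ : ℝ => N) ε
      = (1 / (2 * ε)) * ∫ θ in (0:ℝ)..ℓ,
        Set.indicator (Set.Icc (-ε) ε) (fun _ => (1 : ℝ)) (V θ) * |deriv V θ| := by
    filter_upwards [Ioo_mem_nhdsGT_of_mem (Set.mem_Ico.2 ⟨le_refl (0:ℝ), hε₀⟩)] with ε hε
    obtain ⟨hε1, hε2⟩ := hε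
    have hFper : Function.Periodic (fun θ : ℝ =>
        Set.indicator (Set.Icc (-ε) ε) (fun _ => (1 : ℝ)) (V θ) * |deriv V θ|) ℓ := by
      intro θ; simp only [hper, hper']
    have hshift : (∫ θ in (0:ℝ)..ℓ,
          Set.indicator (Set.Icc (-ε) ε) (fun _ => (1 : ℝ)) (V θ) * |deriv V θ|)
        = ∫ θ in a..(a + ℓ),
          Set.indicator (Set.Icc (-ε) ε) (fun _ => (1 : ℝ)) (V θ) * |deriv V θ| := by
      have := hFper.intervalIntegral_add_eq 0 a
      simpa using this
    rw [hshift, hkey ε hε1 hε2, hcount, hN]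
    have hεne : (2 * ε) ≠ 0 := by positivity
    field_simp
  exact (tendsto_const_nhds.congr' hev)
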